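/- The numbers P(K_n = k) = C(2n-k-1, n-1) · 2^{k+1-2n} for 1 ≤ k ≤ n define a probability distribution on {1,...,n} (they sum to 1), and they satisfy the forward recursion P(K_{n+1} = k) = ((2n-k)/(2n)) P(K_n = k) + ((k-1)/(2n)) P(K_n = k-1), corresponding to the Markov chain with transitions P(K_{n+1}=k | K_n=k) = (2n-k)/(2n) and P(K_{n+1}=k+1 | K_n=k) = k/(2n), started from K_1 = 1. -/

import Mathlib

open Finset

/-- `q n k = C(2n-k-1, n-1) 2^{k+1-2n}` for `1 ≤ k ≤ n`, and `0` otherwise. -/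
noncomputable def blockCountDist (n k : ℕ) : ℝ :=
  if 1 ≤ k ∧ k ≤ n then (Nat.choose (2 * n - k - 1) (n - 1) : ℝ) * (2 : ℝ) ^ ((k : ℤ) + 1 - 2 * n)
  else 0

lemma keyNat (n k : ℕ) (hn : 1 ≤ n) (hk1 : 1 ≤ k) (hkn : k ≤ n) :
    2*n*Nat.choose (2*n-k+1) n
      = 4*(2*n-k)*Nat.choose (2*n-k-1) (n-1) + 2*(k-1)*Nat.choose (2*n-k) (n-1) := by
  obtain ⟨e, rfl⟩ : ∃ e, k = e + 1 := ⟨k-1, by omega⟩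
  obtain ⟨d, rfl⟩ : ∃ d, n = d + e + 1 := ⟨n-e-1, by omega⟩
  have r1 : 2*(d+e+1) - (e+1) = 2*d+e+1 := by omega
  have r2 : 2*d+e+1 - 1 = 2*d+e := by omega
  have r3 : d + e + 1 - 1 = d + e := by omega
  have r4 : e + 1 - 1 = e := by omega
  rw [r1, r2, r3, r4]
  have h1 := Nat.add_one_mul_choose_eq (2*d+e) (d+e)
  have h2 := Nat.choose_succ_right_eq (2*d+e+1) (d+e)
  have h3 := Nat.choose_succ_succ (2*d+e+1) (d+e)
  have r5 : 2*d+e+1 - (d+e) = d + 1 := by omega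
  rw [r5] at h2
  simp only [Nat.succ_eq_add_one] at h1 h3
  zify at h1 h2 h3 ⊢
  linear_combination (-4:ℤ)*h1 - 2*h2 + 2*((d:ℤ)+e+1)*h3

lemma bcd_zero (n k : ℕ) (h : ¬ (1 ≤ k ∧ k ≤ n)) : blockCountDist n k = 0 := by
  rw [blockCountDist, if_neg h]

lemma bcd_recur (n k : ℕ) (hn : 1 ≤ n) (hk : 1 ≤ k) (hkn : k ≤ n + 1) :
    blockCountDist (n + 1) k
      = ((2 * n - k : ℝ) / (2 * n)) * blockCountDist n k
        + ((k - 1 : ℝ) / (2 * n)) * blockCountDist n (k - 1) := by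
  have hn0 : (n : ℝ) ≠ 0 := Nat.cast_ne_zero.mpr (by omega)
  rcases Nat.lt_or_ge k (n+1) with hlt | hge
  · -- case 1 ≤ k ≤ n
    have hkn' : k ≤ n := by omega
    set T : ℝ := (2 : ℝ) ^ ((k : ℤ) - 1 - 2 * n) with hT
    have hTne : T ≠ 0 := zpow_ne_zero _ two_ne_zero
    have p1 : (2 : ℝ) ^ ((k : ℤ) + 1 - 2 * ((n:ℕ)+1 : ℕ)) = T := by
      rw [hT]; congr 1; push_cast; ring
    have p2 : (2 : ℝ) ^ ((k : ℤ) + 1 - 2 * n) = 4 * T := by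
      rw [hT, show (k:ℤ) + 1 - 2*n = ((k:ℤ) - 1 - 2*n) + 2 by ring, zpow_add₀ (two_ne_zero)]
      norm_num; ring
    have p3 : (2 : ℝ) ^ ((k : ℤ) - 2 * n) = 2 * T := by
      rw [hT, show (k:ℤ) - 2*n = ((k:ℤ) - 1 - 2*n) + 1 by ring, zpow_add₀ (two_ne_zero)]
      norm_num; ring
    have h2 : blockCountDist n (k-1) * ((k:ℝ) - 1)
        = (Nat.choose (2*n-k) (n-1) : ℝ) * (2 * T) * ((k:ℝ) - 1) := by
      rcases Nat.lt_or_ge k 2 with h1 | h1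
      · have : k = 1 := by omega
        subst this
        norm_num
      · rw [blockCountDist, if_pos ⟨by omega, by omega⟩,
          show 2*n - (k-1) - 1 = 2*n - k by omega, ← p3]
        have : ((k - 1 : ℕ) : ℤ) + 1 - 2*n = (k:ℤ) - 2*n := by
          have : ((k - 1 : ℕ) : ℤ) = (k:ℤ) - 1 := by push_cast [h1]; omega
          omega
        rw [this]
    have hkey : 2 * (n:ℝ) * (Nat.choose (2*n-k+1) n : ℝ)
        = 4 * ((2*n : ℝ) - k) * (Nat.choose (2*n-k-1) (n-1) : ℝ)
          + 2 * ((k:ℝ) - 1) * (Nat.choose (2*n-k) (n-1) : ℝ) := by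
      have := keyNat n k hn hk hkn'
      have c1 : ((2*n - k : ℕ) : ℝ) = 2*(n:ℝ) - k := by
        have : k ≤ 2*n := by omega
        push_cast [this]; ring
      have c2 : ((k - 1 : ℕ) : ℝ) = (k:ℝ) - 1 := by
        push_cast [hk]; ring
      calc 2 * (n:ℝ) * (Nat.choose (2*n-k+1) n : ℝ)
          = ((2*n*Nat.choose (2*n-k+1) n : ℕ) : ℝ) := by push_cast; ring
        _ = ((4*(2*n-k)*Nat.choose (2*n-k-1) (n-1)
              + 2*(k-1)*Nat.choose (2*n-k) (n-1) : ℕ) : ℝ) := by rw [this]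
        _ = _ := by push_cast [c1, c2]; ring
    rw [blockCountDist, if_pos ⟨hk, hkn⟩, blockCountDist, if_pos ⟨hk, hkn'⟩,
      show 2*(n+1) - k - 1 = 2*n - k + 1 by omega,
      show n + 1 - 1 = n by omega, p1, p2]
    rw [div_mul_eq_mul_div, div_mul_eq_mul_div, ← add_div,
      eq_div_iff (mul_ne_zero (two_ne_zero) hn0 : (2:ℝ) * n ≠ 0),
      mul_comm ((k:ℝ) - 1) (blockCountDist n (k-1)), h2]
    linear_combination T * hkey
  · -- case k = n + 1
    have hk' : k = n + 1 := by omega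
    subst hk'
    rw [bcd_zero n (n+1) (by omega), blockCountDist, if_pos ⟨by omega, le_refl _⟩,
      show n + 1 - 1 = n by omega, blockCountDist, if_pos ⟨hn, le_refl _⟩,
      show 2*(n+1) - (n+1) - 1 = n by omega, show 2*n - n - 1 = n - 1 by omega,
      Nat.choose_self, Nat.choose_self]
    have e1 : ((n+1 : ℕ) : ℤ) + 1 - 2*((n+1 : ℕ) : ℤ) = -(n:ℤ) := by push_cast; ring
    have e2 : ((n : ℕ) : ℤ) + 1 - 2*(n:ℤ) = -(n:ℤ) + 1 := by push_cast; ring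
    rw [e1, e2, zpow_add₀ (two_ne_zero : (2:ℝ) ≠ 0) (-(n:ℤ)) 1]
    push_cast
    field_simp
    ring

lemma bcd_sum (n : ℕ) (hn : 1 ≤ n) : ∑ k ∈ Finset.Icc 1 n, blockCountDist n k = 1 := by
  induction n, hn using Nat.le_induction with
  | base => norm_num [blockCountDist]
  | succ n hn ih =>
    have hn0 : (n : ℝ) ≠ 0 := Nat.cast_ne_zero.mpr (by omega)
    have conv : ∀ (f : ℕ → ℝ) (m : ℕ),
        ∑ k ∈ Finset.Icc 1 m, f k = ∑ i ∈ Finset.range m, f (1+i) := by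
      intro f m
      rw [← Finset.Ico_add_one_right_eq_Icc, Finset.sum_Ico_eq_sum_range]
      simp
    rw [conv] at ih ⊢
    have step : ∀ i ∈ Finset.range (n+1),
        blockCountDist (n+1) (1+i)
          = ((2*n : ℝ) - (1+i))/(2*n) * blockCountDist n (1+i)
            + ((i:ℝ))/(2*n) * blockCountDist n i := by
      intro i hi
      have hi' := Finset.mem_range.mp hi
      have := bcd_recur n (1+i) hn (by omega) (by omega)
      rw [this, show 1 + i - 1 = i by omega]
      push_cast
      ring_nf
    rw [Finset.sum_congr rfl step, Finset.sum_add_distrib,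
      Finset.sum_range_succ, Finset.sum_range_succ',
      bcd_zero n (1+n) (by omega), bcd_zero n 0 (by omega)]
    have : ∀ x ∈ Finset.range n,
        ((2*n : ℝ) - (1+x))/(2*n) * blockCountDist n (1+x)
          + ((x+1 : ℕ):ℝ)/(2*n) * blockCountDist n (x+1)
        = blockCountDist n (1+x) := by
      intro x _
      rw [show x + 1 = 1 + x by omega]
      push_cast
      field_simp
      ring
    simp only [mul_zero, add_zero, Nat.cast_zero, zero_div, zero_mul]
    rw [← Finset.sum_add_distrib, Finset.sum_congr rfl this, ih]

theorem blockCountDist_markov_chain :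
    blockCountDist 1 1 = 1 ∧
    (∀ n : ℕ, 1 ≤ n → ∑ k ∈ Finset.Icc 1 n, blockCountDist n k = 1) ∧
    (∀ n k : ℕ, 1 ≤ n → 1 ≤ k → k ≤ n + 1 →
      blockCountDist (n + 1) k
        = ((2 * n - k : ℝ) / (2 * n)) * blockCountDist n k
          + ((k - 1 : ℝ) / (2 * n)) * blockCountDist n (k - 1)) := by
  refine ⟨?_, bcd_sum, fun n k hn hk hkn => bcd_recur n k hn hk hkn⟩
  rw [blockCountDist, if_pos ⟨le_refl 1, le_refl 1⟩]
  norm_num
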